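/- Let (α, μ) be a finite measure space and n ≥ 1 a natural number. For every measurable φ : α → [0,∞), the infimum, over all measurable functions f : α → [0,∞) with f(x) > 0 for every x, of the quantity (∫⁻ φ²/f dμ) · (∫⁻ fⁿ dμ)^{1/n} equals (∫⁻ φ^{2n/(n+1)} dμ)^{(n+1)/n}. -/

import Mathlib

open MeasureTheory ENNReal NNReal Filter Topology

/-- **Variational characterization step for the chiral bag invariant**: on a finite measure
space, the infimum over all everywhere-positive measurable `f` of
`(∫⁻ φ²/f) · (∫⁻ fⁿ)^(1/n)` equals `(∫⁻ φ^(2n/(n+1)))^((n+1)/n)`. -/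
theorem iInf_lintegral_holder_chiral_bag {α : Type*} [MeasurableSpace α] (μ : Measure α)
    [IsFiniteMeasure μ] (n : ℕ) (hn : 1 ≤ n) (φ : α → NNReal) (hφ : Measurable φ) :
    ⨅ (f : α → NNReal) (_ : Measurable f) (_ : ∀ x, 0 < f x),
        (∫⁻ x, (φ x : ℝ≥0∞) ^ (2 : ℝ) / (f x : ℝ≥0∞) ∂μ) *
          (∫⁻ x, (f x : ℝ≥0∞) ^ (n : ℝ) ∂μ) ^ (1 / (n : ℝ))
      = (∫⁻ x, (φ x : ℝ≥0∞) ^ ((2 * (n : ℝ)) / ((n : ℝ) + 1)) ∂μ) ^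
          (((n : ℝ) + 1) / (n : ℝ)) := by
  have hn0 : (0 : ℝ) < n := by exact_mod_cast hn
  have hn1 : (0 : ℝ) < (n : ℝ) + 1 := by linarith
  set c : ℝ := 2 * (n : ℝ) / ((n : ℝ) + 1) with hc
  have hc0 : 0 ≤ c := by positivity
  set I : ℝ≥0∞ := ∫⁻ x, (φ x : ℝ≥0∞) ^ c ∂μ with hI
  apply le_antisymm
  · -- upper bound: test with f_k = φ^(2/(n+1)) + 1/(k+1)
    by_cases hItop : I = ⊤
    · rw [hItop, ENNReal.top_rpow_of_pos (by positivity)]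
      exact le_top
    set r : ℝ := 2 / ((n : ℝ) + 1) with hr
    have hr0 : 0 ≤ r := by positivity
    set f : ℕ → α → NNReal := fun k x => φ x ^ r + ((k : ℝ≥0) + 1)⁻¹ with hf
    have hfmeas : ∀ k, Measurable (f k) := fun k =>
      ((NNReal.continuous_rpow_const hr0).measurable.comp hφ).add measurable_const
    have hfpos : ∀ k x, 0 < f k x := fun k x => by
      have : (0 : ℝ≥0) < ((k : ℝ≥0) + 1)⁻¹ := by positivity
      exact lt_of_lt_of_le this le_add_self
    have hcoe : ∀ k x, ((f k x : ℝ≥0∞)) = (φ x : ℝ≥0∞) ^ r + ((((k : ℝ≥0) + 1)⁻¹ : ℝ≥0) : ℝ≥0∞) := by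
      intro k x
      rw [hf]
      push_cast [ENNReal.coe_rpow_of_nonneg _ hr0]
      ring
    -- first integral is bounded by I
    have hT1 : ∀ k, (∫⁻ x, (φ x : ℝ≥0∞) ^ (2 : ℝ) / (f k x : ℝ≥0∞) ∂μ) ≤ I := by
      intro k
      apply lintegral_mono
      intro x
      have h1 : (φ x : ℝ≥0∞) ^ (2 : ℝ) / (f k x : ℝ≥0∞)
          ≤ (φ x : ℝ≥0∞) ^ (2 : ℝ) / (φ x : ℝ≥0∞) ^ r := by
        apply ENNReal.div_le_div_left
        rw [hcoe]
        exact le_self_add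
      refine h1.trans (ENNReal.div_le_of_le_mul ?_)
      rw [← ENNReal.rpow_add_of_nonneg _ _ hc0 hr0]
      apply le_of_eq
      congr 1
      rw [hc, hr]
      field_simp
    -- second integral tends to I
    set J : ℕ → ℝ≥0∞ := fun k => ∫⁻ x, (f k x : ℝ≥0∞) ^ (n : ℝ) ∂μ with hJ
    have hpow_eq : ∀ x, ((φ x : ℝ≥0∞) ^ r) ^ (n : ℝ) = (φ x : ℝ≥0∞) ^ c := by
      intro x
      rw [← ENNReal.rpow_mul]
      congr 1
      rw [hr, hc]
      field_simp
    have hJtend : Tendsto J atTop (𝓝 I) := by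
      rw [hJ, hI]
      refine tendsto_lintegral_of_dominated_convergence
        (fun x => ((φ x : ℝ≥0∞) ^ r + 1) ^ (n : ℝ)) ?_ ?_ ?_ ?_
      · intro k
        exact ENNReal.continuous_rpow_const.measurable.comp (hfmeas k).coe_nnreal_ennreal
      · intro k
        refine ae_of_all μ fun x => ?_
        show ((f k x : ℝ≥0∞)) ^ (n : ℝ) ≤ ((φ x : ℝ≥0∞) ^ r + 1) ^ (n : ℝ)
        rw [hcoe]
        apply ENNReal.rpow_le_rpow _ (le_of_lt hn0)
        gcongr
        rw [← ENNReal.coe_one, ENNReal.coe_le_coe, ← NNReal.coe_le_coe]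
        push_cast
        rw [inv_le_one_iff₀]
        right
        linarith [Nat.cast_nonneg (α := ℝ) k]
      · -- finiteness of the dominating integral
        have hbd : ∀ x, ((φ x : ℝ≥0∞) ^ r + 1) ^ (n : ℝ)
            ≤ 2 ^ (n : ℝ) * ((φ x : ℝ≥0∞) ^ c + 1) := by
          intro x
          set A := (φ x : ℝ≥0∞) ^ r with hA
          have h1 : A + 1 ≤ 2 * max A 1 := by
            rw [two_mul]
            exact add_le_add (le_max_left _ _) (le_max_right _ _)
          calc (A + 1) ^ (n : ℝ) ≤ (2 * max A 1) ^ (n : ℝ) :=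
                ENNReal.rpow_le_rpow h1 (le_of_lt hn0)
            _ = 2 ^ (n : ℝ) * (max A 1) ^ (n : ℝ) :=
                ENNReal.mul_rpow_of_nonneg _ _ (le_of_lt hn0)
            _ ≤ 2 ^ (n : ℝ) * ((φ x : ℝ≥0∞) ^ c + 1) := by
                gcongr
                rcases max_cases A 1 with ⟨h, _⟩ | ⟨h, _⟩
                · rw [h, hA, hpow_eq]
                  exact le_self_add
                · rw [h, ENNReal.one_rpow]
                  exact le_add_self
        refine ne_top_of_le_ne_top ?_ (lintegral_mono hbd)
        have hmc : Measurable fun a : α => (φ a : ℝ≥0∞) ^ c :=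
          ENNReal.continuous_rpow_const.measurable.comp hφ.coe_nnreal_ennreal
        have hmc1 : Measurable fun a : α => (φ a : ℝ≥0∞) ^ c + 1 := hmc.add measurable_const
        rw [lintegral_const_mul _ hmc1]
        refine ENNReal.mul_ne_top (ENNReal.rpow_ne_top_of_nonneg (le_of_lt hn0) (by simp)) ?_
        rw [lintegral_add_right _ measurable_const]
        simp only [lintegral_const, one_mul]
        exact ENNReal.add_ne_top.mpr ⟨hItop, measure_ne_top μ _⟩
      · -- pointwise convergence
        refine ae_of_all μ fun x => ?_
        have hε : Tendsto (fun k : ℕ => ((((k : ℝ≥0) + 1)⁻¹ : ℝ≥0) : ℝ≥0∞))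
            atTop (𝓝 0) := by
          rw [← ENNReal.coe_zero]
          rw [ENNReal.tendsto_coe]
          rw [← NNReal.tendsto_coe]
          refine tendsto_one_div_add_atTop_nhds_zero_nat.congr fun k => ?_
          push_cast
          rw [one_div]
        have hadd : Tendsto (fun k : ℕ => (f k x : ℝ≥0∞)) atTop (𝓝 ((φ x : ℝ≥0∞) ^ r)) := by
          have := (tendsto_const_nhds (x := (φ x : ℝ≥0∞) ^ r) (f := atTop (α := ℕ))).add hε
          rw [add_zero] at this
          refine this.congr fun k => (hcoe k x).symm
        have := (ENNReal.continuous_rpow_const (y := (n : ℝ))).continuousAt.tendsto.comp hadd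
        rwa [hpow_eq] at this
    -- conclude
    have key : ∀ k, (⨅ (f : α → NNReal) (_ : Measurable f) (_ : ∀ x, 0 < f x),
        (∫⁻ x, (φ x : ℝ≥0∞) ^ (2 : ℝ) / (f x : ℝ≥0∞) ∂μ) *
          (∫⁻ x, (f x : ℝ≥0∞) ^ (n : ℝ) ∂μ) ^ (1 / (n : ℝ)))
        ≤ I * (J k) ^ (1 / (n : ℝ)) := by
      intro k
      refine le_trans (iInf_le_of_le (f k) (iInf_le_of_le (hfmeas k)
        (iInf_le _ (hfpos k)))) ?_
      exact mul_le_mul_left (hT1 k) _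
    have hmul : Tendsto (fun k => I * (J k) ^ (1 / (n : ℝ))) atTop
        (𝓝 (I * I ^ (1 / (n : ℝ)))) := by
      refine ENNReal.Tendsto.const_mul ?_ (Or.inr hItop)
      exact (ENNReal.continuous_rpow_const (y := 1 / (n : ℝ))).continuousAt.tendsto.comp hJtend
    have hfinal : I * I ^ (1 / (n : ℝ)) = I ^ (((n : ℝ) + 1) / (n : ℝ)) := by
      have : ((n : ℝ) + 1) / (n : ℝ) = 1 + 1 / (n : ℝ) := by field_simp
      rw [this, ENNReal.rpow_add_of_nonneg _ _ zero_le_one (by positivity), ENNReal.rpow_one]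
    exact ge_of_tendsto' (hfinal ▸ hmul) key
  · -- lower bound via Hölder
    refine le_iInf fun f => le_iInf fun hfm => le_iInf fun hfpos => ?_
    set d : ℝ := (n : ℝ) / ((n : ℝ) + 1) with hd
    have hd0 : 0 ≤ d := by positivity
    have hpq : ((((n : ℝ) + 1) / (n : ℝ))).HolderConjugate ((n : ℝ) + 1) := by
      rw [Real.holderConjugate_iff]
      constructor
      · rw [lt_div_iff₀ hn0]; linarith
      · rw [inv_div]
        field_simp
    set g : α → ℝ≥0∞ := fun x => ((φ x : ℝ≥0∞) ^ (2 : ℝ) / (f x : ℝ≥0∞)) ^ d with hg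
    set h : α → ℝ≥0∞ := fun x => (f x : ℝ≥0∞) ^ d with hh
    have hgm : AEMeasurable g μ := by
      refine Measurable.aemeasurable ?_
      exact ENNReal.continuous_rpow_const.measurable.comp
        ((ENNReal.continuous_rpow_const.measurable.comp hφ.coe_nnreal_ennreal).div
          hfm.coe_nnreal_ennreal)
    have hhm : AEMeasurable h μ := by
      exact (ENNReal.continuous_rpow_const.measurable.comp hfm.coe_nnreal_ennreal).aemeasurable
    have hHolder := ENNReal.lintegral_mul_le_Lp_mul_Lq μ hpq hgm hhm
    -- identify the three integrands
    have hfne : ∀ x, (f x : ℝ≥0∞) ≠ 0 := fun x => by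
      simpa using (hfpos x).ne'
    have hfnt : ∀ x, (f x : ℝ≥0∞) ≠ ⊤ := fun x => ENNReal.coe_ne_top
    have e1 : ∀ x, (g * h) x = (φ x : ℝ≥0∞) ^ c := by
      intro x
      simp only [hg, hh, Pi.mul_apply]
      rw [ENNReal.div_rpow_of_nonneg _ _ hd0,
        ENNReal.div_mul_cancel (by simp [ENNReal.rpow_eq_zero_iff, hfne x, hfnt x])
          (ENNReal.rpow_ne_top_of_nonneg hd0 (hfnt x)),
        ← ENNReal.rpow_mul]
      congr 1
      rw [hd, hc]
      ring
    have e2 : ∀ x, g x ^ (((n : ℝ) + 1) / (n : ℝ)) = (φ x : ℝ≥0∞) ^ (2 : ℝ) / (f x : ℝ≥0∞) := by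
      intro x
      simp only [hg]
      rw [← ENNReal.rpow_mul]
      have : d * (((n : ℝ) + 1) / (n : ℝ)) = 1 := by
        rw [hd]; field_simp
      rw [this, ENNReal.rpow_one]
    have e3 : ∀ x, h x ^ ((n : ℝ) + 1) = (f x : ℝ≥0∞) ^ (n : ℝ) := by
      intro x
      simp only [hh]
      rw [← ENNReal.rpow_mul]
      congr 1
      rw [hd]; field_simp
    rw [funext e1] at hHolder
    simp only [funext e2, funext e3] at hHolder
    -- raise Hölder to the power (n+1)/n
    have hHolder2 := ENNReal.rpow_le_rpow hHolder (le_of_lt (by positivity :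
      (0 : ℝ) < ((n : ℝ) + 1) / (n : ℝ)))
    rw [ENNReal.mul_rpow_of_nonneg _ _ (by positivity), ← ENNReal.rpow_mul,
      ← ENNReal.rpow_mul] at hHolder2
    have he1 : 1 / (((n : ℝ) + 1) / (n : ℝ)) * (((n : ℝ) + 1) / (n : ℝ)) = 1 := by
      field_simp
    have he2 : 1 / ((n : ℝ) + 1) * (((n : ℝ) + 1) / (n : ℝ)) = 1 / (n : ℝ) := by
      field_simp
    rw [he1, he2, ENNReal.rpow_one] at hHolder2
    exact hHolder2
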